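/- Suppose V : [0,∞) → ℝ is a continuously differentiable nonnegative function satisfying V'(t) ≤ −(p₀ V(t)^p + q₀ V(t)^q) for all t ≥ 0, where p₀, q₀ > 0, 0 < p < 1, and q > 1. Then V(t) = 0 for all t ≥ T*, where T* = 1/(p₀(1−p)) + 1/(q₀(q−1)). -/

import Mathlib

/-- Mean value inequality: if `f' ≤ C` on `[a,b]`, then `f b - f a ≤ C * (b - a)`. -/
lemma deriv_le_slope_aux (f f' : ℝ → ℝ) (a b C : ℝ) (hab : a ≤ b)
    (hf : ∀ x ∈ Set.Icc a b, HasDerivAt f (f' x) x)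
    (hC : ∀ x ∈ Set.Icc a b, f' x ≤ C) :
    f b - f a ≤ C * (b - a) := by
  have h1 : MonotoneOn (fun x => C * x - f x) (Set.Icc a b) := by
    apply monotoneOn_of_deriv_nonneg (convex_Icc a b)
    · exact (continuousOn_const.mul continuousOn_id).sub
        (fun x hx => (hf x hx).continuousAt.continuousWithinAt)
    · intro x hx
      rw [interior_Icc] at hx
      exact (((hasDerivAt_id' (x := x)).const_mul C).sub
        (hf x (Set.Ioo_subset_Icc_self hx))).differentiableAt.differentiableWithinAt
    · intro x hx
      rw [interior_Icc] at hx
      have hd := (((hasDerivAt_id' (x := x)).const_mul C).sub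
        (hf x (Set.Ioo_subset_Icc_self hx))).deriv
      rw [show (fun x => C * x - f x) = ((fun y => C * y) - f) from rfl, hd]
      have := hC x (Set.Ioo_subset_Icc_self hx)
      simp only [mul_one]
      linarith
  have h2 := h1 (Set.left_mem_Icc.2 hab) (Set.right_mem_Icc.2 hab) hab
  simp only at h2
  nlinarith

theorem stmt_8 (V V' : ℝ → ℝ) (p₀ q₀ p q : ℝ)
    (hp₀ : 0 < p₀) (hq₀ : 0 < q₀) (hp0 : 0 < p) (hp1 : p < 1) (hq : 1 < q)
    (hVnonneg : ∀ t, 0 ≤ t → 0 ≤ V t)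
    (hderiv : ∀ t, 0 ≤ t → HasDerivAt V (V' t) t)
    (hcont : ContinuousOn V' (Set.Ici (0 : ℝ)))
    (hineq : ∀ t, 0 ≤ t → V' t ≤ -(p₀ * V t ^ p + q₀ * V t ^ q)) :
    ∀ t, 1 / (p₀ * (1 - p)) + 1 / (q₀ * (q - 1)) ≤ t → V t = 0 := by
  intro t ht
  set T₁ : ℝ := 1 / (p₀ * (1 - p)) with hT₁def
  set T₂ : ℝ := 1 / (q₀ * (q - 1)) with hT₂def
  have hc₁pos : 0 < p₀ * (1 - p) := mul_pos hp₀ (by linarith)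
  have hc₂pos : 0 < q₀ * (q - 1) := mul_pos hq₀ (by linarith)
  have hT₁pos : 0 < T₁ := div_pos one_pos hc₁pos
  have hT₂pos : 0 < T₂ := div_pos one_pos hc₂pos
  -- V' is nonpositive on [0,∞)
  have hV'nonpos : ∀ s, 0 ≤ s → V' s ≤ 0 := by
    intro s hs
    have h1 : 0 ≤ V s ^ p := Real.rpow_nonneg (hVnonneg s hs) p
    have h2 : 0 ≤ V s ^ q := Real.rpow_nonneg (hVnonneg s hs) q
    have := hineq s hs
    nlinarith
  -- V is nonincreasing on [0,∞)
  have hanti : ∀ a b : ℝ, 0 ≤ a → a ≤ b → V b ≤ V a := by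
    intro a b ha hab
    have := deriv_le_slope_aux V V' a b 0 hab
      (fun x hx => hderiv x (le_trans ha hx.1))
      (fun x hx => hV'nonpos x (le_trans ha hx.1))
    nlinarith
  -- Phase 1: V T₂ ≤ 1
  have hVT₂ : V T₂ ≤ 1 := by
    by_contra hcon
    push_neg at hcon
    have hpos : ∀ s ∈ Set.Icc (0:ℝ) T₂, 1 < V s := fun s hs =>
      lt_of_lt_of_le hcon (hanti s T₂ hs.1 hs.2)
    have hg : ∀ s ∈ Set.Icc (0:ℝ) T₂,
        HasDerivAt (fun u => -(V u ^ (1 - q))) (-(V' s * (1 - q) * V s ^ (1 - q - 1))) s := by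
      intro s hs
      exact ((hderiv s hs.1).rpow_const (Or.inl (by nlinarith [hpos s hs]))).neg
    have hgC : ∀ s ∈ Set.Icc (0:ℝ) T₂,
        -(V' s * (1 - q) * V s ^ (1 - q - 1)) ≤ -(q₀ * (q - 1)) := by
      intro s hs
      have hVs := hpos s hs
      have hVsp : 0 < V s := by linarith
      have h1 : V' s ≤ -(p₀ * V s ^ p + q₀ * V s ^ q) := hineq s hs.1
      have h2 : 0 < V s ^ (1 - q - 1) := Real.rpow_pos_of_pos hVsp _
      have h3 : V s ^ (1 - q - 1) * V s ^ q = 1 := by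
        rw [← Real.rpow_add hVsp]
        norm_num
      have h4 : 0 ≤ p₀ * V s ^ p := by positivity
      nlinarith [mul_le_mul_of_nonneg_left h1 h2.le,
        mul_le_mul_of_nonneg_left h4 h2.le]
    have hmv := deriv_le_slope_aux (fun u => -(V u ^ (1 - q))) _ 0 T₂
      (-(q₀ * (q - 1))) hT₂pos.le hg hgC
    have hT₂mul : q₀ * (q - 1) * T₂ = 1 := by
      rw [hT₂def]; field_simp; exact div_self (by linarith : (0:ℝ) < q - 1).ne'
    have hg0 : 0 < V 0 ^ (1 - q) := by
      have : 1 < V 0 := hpos 0 ⟨le_refl _, hT₂pos.le⟩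
      exact Real.rpow_pos_of_pos (by linarith) _
    have hgT₂lt : V T₂ ^ (1 - q) < 1 :=
      Real.rpow_lt_one_of_one_lt_of_neg hcon (by linarith)
    nlinarith
  -- Phase 2: suppose V t > 0, derive contradiction
  have hT₂let : T₂ ≤ t := by linarith
  by_contra hVt
  have hVtpos : 0 < V t := lt_of_le_of_ne (hVnonneg t (by linarith)) (Ne.symm hVt)
  have hpos : ∀ s ∈ Set.Icc T₂ t, 0 < V s := fun s hs =>
    lt_of_lt_of_le hVtpos (hanti s t (le_trans hT₂pos.le hs.1) hs.2)
  have hh : ∀ s ∈ Set.Icc T₂ t,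
      HasDerivAt (fun u => V u ^ (1 - p)) (V' s * (1 - p) * V s ^ (1 - p - 1)) s := by
    intro s hs
    exact (hderiv s (le_trans hT₂pos.le hs.1)).rpow_const (Or.inl (hpos s hs).ne')
  have hhC : ∀ s ∈ Set.Icc T₂ t,
      V' s * (1 - p) * V s ^ (1 - p - 1) ≤ -(p₀ * (1 - p)) := by
    intro s hs
    have hVsp : 0 < V s := hpos s hs
    have h1 : V' s ≤ -(p₀ * V s ^ p + q₀ * V s ^ q) := hineq s (le_trans hT₂pos.le hs.1)
    have h2 : 0 < V s ^ (1 - p - 1) := Real.rpow_pos_of_pos hVsp _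
    have h3 : V s ^ (1 - p - 1) * V s ^ p = 1 := by
      rw [← Real.rpow_add hVsp]
      norm_num
    have h4 : 0 ≤ q₀ * V s ^ q := by positivity
    nlinarith [mul_le_mul_of_nonneg_left h1 h2.le,
      mul_le_mul_of_nonneg_left h4 h2.le]
  have hmv := deriv_le_slope_aux (fun u => V u ^ (1 - p)) _ T₂ t
    (-(p₀ * (1 - p))) hT₂let hh hhC
  have hhT₂le : V T₂ ^ (1 - p) ≤ 1 :=
    Real.rpow_le_one (hVnonneg T₂ hT₂pos.le) hVT₂ (by linarith)
  have hhtpos : 0 < V t ^ (1 - p) := Real.rpow_pos_of_pos hVtpos _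
  have hT₁mul : p₀ * (1 - p) * T₁ = 1 := by
    rw [hT₁def]; field_simp; exact div_self (by linarith : (0:ℝ) < 1 - p).ne'
  nlinarith [mul_le_mul_of_nonneg_left (by linarith : T₁ + T₂ ≤ t) hc₁pos.le]
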